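/- arXiv:0803.2371 — 2 statements merged into one kernel-verified Lean document; each statement's English description precedes it below -/
import Mathlib

section
/- Let Z, N, A be n×n real matrices and let I denote the n×n identity matrix. Then rank(Z·A − A·N) ≤ rank(A − Zᵀ·A·N) + rank(I − Z·Zᵀ). (In displacement notation: δ^Δ_{Z,N}{A} ≤ δ^∇_{Zᵀ,N}{A} + δ^∇_{Z,Zᵀ}{I}.) -/
open Matrix

lemma matrix_rank_add_le (n : ℕ) (A B : Matrix (Fin n) (Fin n) ℝ) :
    (A + B).rank ≤ A.rank + B.rank := by
  simp only [Matrix.rank]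
  have h : LinearMap.range (A + B).mulVecLin ≤
      LinearMap.range A.mulVecLin ⊔ LinearMap.range B.mulVecLin := by
    rintro x ⟨v, rfl⟩
    exact Submodule.mem_sup.2 ⟨A.mulVecLin v, ⟨v, rfl⟩, B.mulVecLin v, ⟨v, rfl⟩, by
      simp [Matrix.add_mulVec]⟩
  have h2 := Submodule.finrank_sup_add_finrank_inf_eq (LinearMap.range A.mulVecLin)
    (LinearMap.range B.mulVecLin)
  have h3 := Submodule.finrank_mono h
  omega

theorem displacement_delta_le_nabla (n : ℕ) (Z N A : Matrix (Fin n) (Fin n) ℝ) :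
    (Z * A - A * N).rank ≤ (A - Zᵀ * A * N).rank + ((1 : Matrix (Fin n) (Fin n) ℝ) - Z * Zᵀ).rank := by
  have h : Z * A - A * N = Z * (A - Zᵀ * A * N) + ((1 : Matrix (Fin n) (Fin n) ℝ) - Z * Zᵀ) * (-(A * N)) := by
    noncomm_ring
  rw [h]
  calc (Z * (A - Zᵀ * A * N) + ((1 : Matrix (Fin n) (Fin n) ℝ) - Z * Zᵀ) * (-(A * N))).rank
      ≤ (Z * (A - Zᵀ * A * N)).rank + (((1 : Matrix (Fin n) (Fin n) ℝ) - Z * Zᵀ) * (-(A * N))).rank :=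
        matrix_rank_add_le n _ _
    _ ≤ (A - Zᵀ * A * N).rank + ((1 : Matrix (Fin n) (Fin n) ℝ) - Z * Zᵀ).rank :=
        Nat.add_le_add (Matrix.rank_mul_le_right _ _) (Matrix.rank_mul_le_left _ _)
end

section
/- Let A be a real m×n matrix with m ≥ n and full column rank (rank A = n), so that AᵀA is invertible, and let B = (AᵀA)⁻¹Aᵀ be its pseudo-inverse. Let Z be an m×m and N an n×n real matrix. Then rank(N·B − B·Zᵀ) ≤ 3·rank(Z·A − A·N) + rank(Zᵀ − Z). In displacement notation: δ^Δ_{N,Zᵀ}{B} ≤ 3·δ^Δ_{Z,N}{A} + δ^Δ_{Zᵀ,Z}{I_m}. -/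
open Matrix

private lemma mrank_neg {a b : ℕ} (X : Matrix (Fin a) (Fin b) ℝ) :
    (-X).rank = X.rank := by
  have h1 : IsUnit (-1 : Matrix (Fin b) (Fin b) ℝ).det :=
    Matrix.isUnit_det_of_left_inverse (B := -1) (by simp)
  have h2 : (-X) = X * (-1 : Matrix (Fin b) (Fin b) ℝ) := by simp
  rw [h2, Matrix.rank_mul_eq_left_of_isUnit_det _ _ h1]

private lemma mrank_add_le {a b : ℕ} (X Y : Matrix (Fin a) (Fin b) ℝ) :
    (X + Y).rank ≤ X.rank + Y.rank := by
  have h : LinearMap.range (X + Y).mulVecLin ≤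
      LinearMap.range X.mulVecLin ⊔ LinearMap.range Y.mulVecLin := by
    rintro _ ⟨v, rfl⟩
    rw [Matrix.mulVecLin_add]
    exact Submodule.add_mem_sup ⟨v, rfl⟩ ⟨v, rfl⟩
  calc (X + Y).rank
      ≤ Module.finrank ℝ ↥(LinearMap.range X.mulVecLin ⊔ LinearMap.range Y.mulVecLin) :=
        Submodule.finrank_mono h
    _ ≤ X.rank + Y.rank := Submodule.finrank_add_le_finrank_add_finrank _ _

theorem pseudoinverse_delta_displacement' (m n : ℕ) (hmn : n ≤ m)
    (A : Matrix (Fin m) (Fin n) ℝ) (hA : A.rank = n)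
    (Z : Matrix (Fin m) (Fin m) ℝ) (N : Matrix (Fin n) (Fin n) ℝ) :
    (N * ((Aᵀ * A)⁻¹ * Aᵀ) - ((Aᵀ * A)⁻¹ * Aᵀ) * Zᵀ).rank
      ≤ 3 * (Z * A - A * N).rank + (Zᵀ - Z).rank := by
  -- invertibility of AᵀA
  have hdet : IsUnit (Aᵀ * A).det := by
    have hr : Module.finrank ℝ ↥(LinearMap.range (Aᵀ * A).mulVecLin) = n := by
      have := Matrix.rank_transpose_mul_self A
      rw [Matrix.rank] at this
      rw [this, hA]
    have htop : LinearMap.range (Aᵀ * A).mulVecLin = ⊤ := by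
      apply Submodule.eq_top_of_finrank_eq
      rw [hr, Module.finrank_fin_fun]
    have hinj : Function.Injective (Aᵀ * A).mulVecLin :=
      (LinearMap.injective_iff_surjective).mpr (LinearMap.range_eq_top.mp htop)
    rw [isUnit_iff_ne_zero]
    intro h0
    obtain ⟨v, hv, hv0⟩ := (Matrix.exists_mulVec_eq_zero_iff).mpr h0
    exact hv (hinj (show (Aᵀ * A).mulVecLin v = (Aᵀ * A).mulVecLin 0 by
      simp only [Matrix.mulVecLin_apply, map_zero]; exact hv0))
  have hGi : (Aᵀ * A)⁻¹ * (Aᵀ * A) = 1 := Matrix.nonsing_inv_mul _ hdet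
  have hGi' : (Aᵀ * A) * (Aᵀ * A)⁻¹ = 1 := Matrix.mul_nonsing_inv _ hdet
  set B : Matrix (Fin n) (Fin m) ℝ := (Aᵀ * A)⁻¹ * Aᵀ with hB
  have hBA : B * A = 1 := by rw [hB, Matrix.mul_assoc]; exact hGi
  -- key identity
  have r1 : B * (A * (N * B)) = N * B := by
    rw [← Matrix.mul_assoc, ← Matrix.mul_assoc, hBA, Matrix.one_mul]
  have r2 : Aᵀ * (A * B) = Aᵀ := by
    rw [hB, ← Matrix.mul_assoc, ← Matrix.mul_assoc, hGi', Matrix.one_mul]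
  have key : N * B - B * Zᵀ =
      (B * (A * N - Z * A) * B + B * (Z - Zᵀ) * (A * B)) +
        (Aᵀ * A)⁻¹ * (A * N - Z * A)ᵀ * (1 - A * B) := by
    simp only [Matrix.mul_sub, Matrix.sub_mul, Matrix.mul_one, transpose_sub,
      transpose_mul, Matrix.mul_assoc]
    rw [r1, r2]
    simp only [hB, Matrix.mul_assoc]
    abel
  rw [key]
  have hneg1 : (A * N - Z * A).rank = (Z * A - A * N).rank := by
    rw [show A * N - Z * A = -(Z * A - A * N) from (neg_sub _ _).symm, mrank_neg]
  have hneg2 : (Z - Zᵀ).rank = (Zᵀ - Z).rank := by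
    rw [show Z - Zᵀ = -(Zᵀ - Z) from (neg_sub _ _).symm, mrank_neg]
  have b1 : (B * (A * N - Z * A) * B).rank ≤ (Z * A - A * N).rank :=
    ((Matrix.rank_mul_le_left (B * (A * N - Z * A)) B).trans
      (Matrix.rank_mul_le_right B (A * N - Z * A))).trans hneg1.le
  have b2 : (B * (Z - Zᵀ) * (A * B)).rank ≤ (Zᵀ - Z).rank :=
    ((Matrix.rank_mul_le_left (B * (Z - Zᵀ)) (A * B)).trans
      (Matrix.rank_mul_le_right B (Z - Zᵀ))).trans hneg2.le
  have b3 : ((Aᵀ * A)⁻¹ * (A * N - Z * A)ᵀ * (1 - A * B)).rank ≤ (Z * A - A * N).rank :=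
    ((Matrix.rank_mul_le_left ((Aᵀ * A)⁻¹ * (A * N - Z * A)ᵀ) (1 - A * B)).trans
      (Matrix.rank_mul_le_right (Aᵀ * A)⁻¹ (A * N - Z * A)ᵀ)).trans
      (((Matrix.rank_transpose _).trans hneg1).le)
  calc ((B * (A * N - Z * A) * B + B * (Z - Zᵀ) * (A * B)) +
        (Aᵀ * A)⁻¹ * (A * N - Z * A)ᵀ * (1 - A * B)).rank
      ≤ (B * (A * N - Z * A) * B + B * (Z - Zᵀ) * (A * B)).rank +
        ((Aᵀ * A)⁻¹ * (A * N - Z * A)ᵀ * (1 - A * B)).rank := mrank_add_le _ _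
    _ ≤ ((B * (A * N - Z * A) * B).rank + (B * (Z - Zᵀ) * (A * B)).rank) +
        ((Aᵀ * A)⁻¹ * (A * N - Z * A)ᵀ * (1 - A * B)).rank :=
        Nat.add_le_add_right (mrank_add_le _ _) _
    _ ≤ ((Z * A - A * N).rank + (Zᵀ - Z).rank) + (Z * A - A * N).rank :=
        add_le_add (add_le_add b1 b2) b3
    _ ≤ 3 * (Z * A - A * N).rank + (Zᵀ - Z).rank := by omega
end
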